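/- arXiv:2312.10691 — 2 statements merged into one kernel-verified Lean document; each statement's English description precedes it below -/
import Mathlib

section
/- Let d ≥ 2, ξ a primitive d-th root of unity, σ ∈ Sym({0,…,n+1}), and p : {0,…,n+1} → ℤ/d. The projective transformation α = diag(ξ^{p₀}, …, ξ^{p_{n+1}})·P_σ of ℙ^{n+1}(ℂ) satisfies (α ∘ ρ)² = id (ρ = coordinatewise complex conjugation) if and only if σ² = id and the function i ↦ p_i − p_{σ(i)} (mod d) is constant. Moreover, if σ has a fixed point, this constant is 0; and if σ is fixed-point-free, the constant c satisfies 2c ≡ 0 (mod d). -/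
/-- The antiholomorphic map `α ∘ ρ` on `ℂ^{n+2}` where `α = D(p)·P_σ` and `ρ` is
coordinatewise conjugation: `(α∘ρ)(x)_i = ξ^{p_i} · conj(x_{σ(i)})`. -/
noncomputable def diagPermConj (n : ℕ) (ξ : ℂ) (p : Fin (n + 2) → ℤ)
    (σ : Equiv.Perm (Fin (n + 2))) : (Fin (n + 2) → ℂ) → (Fin (n + 2) → ℂ) :=
  fun x i => ξ ^ (p i) * (starRingEnd ℂ) (x (σ i))

/-- `(α ∘ ρ)²` is the identity as a projective transformation (i.e. a nonzero scalar as a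
linear map) iff `σ² = id` and `i ↦ p_i − p_{σ(i)}` is constant mod `d`; moreover this constant
is `0 (mod d)` if `σ` has a fixed point, and satisfies `2c ≡ 0 (mod d)` if `σ` is
fixed-point-free. -/
theorem stmt11 (n d : ℕ) (hd : 2 ≤ d) (ξ : ℂ) (hξ : IsPrimitiveRoot ξ d)
    (σ : Equiv.Perm (Fin (n + 2))) (p : Fin (n + 2) → ℤ) :
    ((∃ c : ℂ, c ≠ 0 ∧ ∀ (x : Fin (n + 2) → ℂ) (i : Fin (n + 2)),
        diagPermConj n ξ p σ (diagPermConj n ξ p σ x) i = c * x i) ↔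
      (σ * σ = 1 ∧ ∃ m : ℤ, ∀ i : Fin (n + 2), p i - p (σ i) ≡ m [ZMOD (d : ℤ)])) ∧
    (∀ m : ℤ,
      (∃ c : ℂ, c ≠ 0 ∧ ∀ (x : Fin (n + 2) → ℂ) (i : Fin (n + 2)),
        diagPermConj n ξ p σ (diagPermConj n ξ p σ x) i = c * x i) →
      (∀ i : Fin (n + 2), p i - p (σ i) ≡ m [ZMOD (d : ℤ)]) →
      ((∃ j : Fin (n + 2), σ j = j) → m ≡ 0 [ZMOD (d : ℤ)]) ∧
      ((∀ j : Fin (n + 2), σ j ≠ j) → 2 * m ≡ 0 [ZMOD (d : ℤ)])) := by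
  have hd0 : d ≠ 0 := by omega
  have hξ0 : ξ ≠ 0 := hξ.ne_zero hd0
  have hinv : (starRingEnd ℂ) ξ = ξ⁻¹ := by
    have hn : ‖ξ‖ = 1 := Complex.norm_eq_one_of_pow_eq_one hξ.pow_eq_one hd0
    rw [← Complex.inv_eq_conj hn]
  have key : ∀ a b : ℤ, ξ ^ a = ξ ^ b ↔ a ≡ b [ZMOD (d : ℤ)] := by
    intro a b
    constructor
    · intro h
      have h1 : ξ ^ (a - b) = 1 := by
        rw [zpow_sub₀ hξ0, h, div_self (zpow_ne_zero _ hξ0)]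
      obtain ⟨k, hk⟩ := (hξ.zpow_eq_one_iff_dvd _).mp h1
      exact Int.modEq_iff_dvd.mpr ⟨-k, by linarith⟩
    · intro h
      obtain ⟨k, hk⟩ := Int.modEq_iff_dvd.mp h
      have : b = a + d * k := by omega
      rw [this, zpow_add₀ hξ0, zpow_mul, zpow_natCast, hξ.pow_eq_one, one_zpow, mul_one]
  have comp : ∀ (x : Fin (n+2) → ℂ) i, diagPermConj n ξ p σ (diagPermConj n ξ p σ x) i
      = ξ ^ (p i - p (σ i)) * x (σ (σ i)) := by
    intro x i
    simp only [diagPermConj, map_mul, map_zpow₀, Complex.conj_conj, hinv, zpow_sub₀ hξ0]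
    field_simp
    rw [one_div, inv_zpow, mul_comm, ← mul_assoc, mul_inv_cancel₀ (zpow_ne_zero _ hξ0), one_mul]
  -- forward direction analysis, reused below
  have fwd : (∃ c : ℂ, c ≠ 0 ∧ ∀ (x : Fin (n + 2) → ℂ) (i : Fin (n + 2)),
        diagPermConj n ξ p σ (diagPermConj n ξ p σ x) i = c * x i) →
      (∀ i, σ (σ i) = i) ∧ ∃ m : ℤ, ∀ i : Fin (n + 2), p i - p (σ i) ≡ m [ZMOD (d : ℤ)] := by
    rintro ⟨c, hc0, H⟩
    have hσ : ∀ i, σ (σ i) = i := by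
      intro i
      by_contra hne
      have h := H (fun j => if j = σ (σ i) then 1 else 0) i
      rw [comp, if_pos rfl, if_neg (fun hh : i = σ (σ i) => hne hh.symm), mul_one,
        mul_zero] at h
      exact zpow_ne_zero _ hξ0 h
    have hc : ∀ i, ξ ^ (p i - p (σ i)) = c := by
      intro i
      have h := H (fun _ => 1) i
      rw [comp] at h
      simpa using h
    exact ⟨hσ, p 0 - p (σ 0), fun i => (key _ _).mp ((hc i).trans (hc 0).symm)⟩
  constructor
  · constructor
    · intro h
      obtain ⟨hσ, hm⟩ := fwd h
      exact ⟨Equiv.ext fun i => by simp [Equiv.Perm.mul_apply, hσ i], hm⟩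
    · rintro ⟨hσ2, m, hm⟩
      have hσ : ∀ i, σ (σ i) = i := by
        intro i
        have := Equiv.ext_iff.mp hσ2 i
        simpa [Equiv.Perm.mul_apply] using this
      refine ⟨ξ ^ m, zpow_ne_zero _ hξ0, fun x i => ?_⟩
      rw [comp, hσ i, (key _ _).mpr (hm i)]
  · intro m hex hm
    obtain ⟨hσ, -⟩ := fwd hex
    constructor
    · rintro ⟨j, hj⟩
      have := hm j
      rw [hj, sub_self] at this
      exact this.symm
    · intro _
      have h1 := hm 0
      have h2 := hm (σ 0)
      rw [hσ 0] at h2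
      have := (h1.add h2).symm
      simpa [two_mul] using this
end

section
/- Let d ≥ 1 be odd and x₀, x₁, x₂ ∈ ℝ not all zero with x₀^d + x₁^d + x₂^d = 0, and also y₀, y₁, y₂ ∈ ℝ not all zero with y₀^d + y₁^d + y₂^d = 0. If [x₁ : x₂] = [y₁ : y₂] in ℝP¹ then [x₀ : x₁ : x₂] = [y₀ : y₁ : y₂] in ℝP². Consequently, the real locus { [x₀ : x₁ : x₂] ∈ ℝP² : x₀^d + x₁^d + x₂^d = 0 } is homeomorphic to ℝP¹ via projection to [x₁ : x₂]. -/
/-- Quotient topology on real projective space. -/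
noncomputable instance projSpaceTopology (n : ℕ) :
    TopologicalSpace (Projectivization ℝ (Fin n → ℝ)) :=
  instTopologicalSpaceQuotient

/-- The real locus of the Fermat curve `x₀^d + x₁^d + x₂^d = 0` in `ℝP²`. -/
def fermatCurveLocus (d : ℕ) : Set (Projectivization ℝ (Fin 3 → ℝ)) :=
  {p | p.rep 0 ^ d + p.rep 1 ^ d + p.rep 2 ^ d = 0}

open Projectivization

section OddRoot
variable {d : ℕ} (hdodd : Odd d)

lemma odd_pow_surj (hdodd : Odd d) : Function.Surjective (fun a : ℝ => a ^ d) := by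
  have hd0 : d ≠ 0 := by rintro rfl; simp [Nat.odd_iff] at hdodd
  intro t
  rcases le_or_gt 0 t with ht | ht
  · refine ⟨t ^ ((d : ℝ)⁻¹), ?_⟩
    simp only
    rw [← Real.rpow_natCast (t ^ ((d:ℝ)⁻¹)) d, ← Real.rpow_mul ht,
      inv_mul_cancel₀ (by exact_mod_cast hd0), Real.rpow_one]
  · refine ⟨-((-t) ^ ((d : ℝ)⁻¹)), ?_⟩
    simp only
    rw [hdodd.neg_pow, ← Real.rpow_natCast ((-t) ^ ((d:ℝ)⁻¹)) d, ← Real.rpow_mul (by linarith),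
      inv_mul_cancel₀ (by exact_mod_cast hd0), Real.rpow_one, neg_neg]

/-- The odd power map as an order isomorphism of `ℝ`. -/
noncomputable def oddPowIso (hdodd : Odd d) : ℝ ≃o ℝ :=
  StrictMono.orderIsoOfSurjective _ hdodd.strictMono_pow (odd_pow_surj hdodd)

/-- The odd `d`-th root. -/
noncomputable def oddRoot (hdodd : Odd d) : ℝ → ℝ := (oddPowIso hdodd).symm

lemma oddRoot_pow (t : ℝ) : (oddRoot hdodd t) ^ d = t :=
  (oddPowIso hdodd).apply_symm_apply t

lemma pow_oddRoot (t : ℝ) : oddRoot hdodd (t ^ d) = t :=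
  (oddPowIso hdodd).symm_apply_apply t

lemma continuous_oddRoot : Continuous (oddRoot hdodd) :=
  ((oddPowIso hdodd).symm.toHomeomorph).continuous

lemma pow_injective (hdodd : Odd d) : Function.Injective (fun a : ℝ => a ^ d) :=
  hdodd.strictMono_pow.injective

lemma oddRoot_smul (t s : ℝ) : oddRoot hdodd (t ^ d * s) = t * oddRoot hdodd s := by
  apply pow_injective hdodd
  show (oddRoot hdodd (t ^ d * s)) ^ d = (t * oddRoot hdodd s) ^ d
  rw [oddRoot_pow, mul_pow, oddRoot_pow]
end OddRoot

section Proj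
variable {n : ℕ}

lemma exists_unit_smul {v w : Fin n → ℝ} (hv : v ≠ 0) (hw : w ≠ 0)
    (h : mk ℝ v hv = mk ℝ w hw) : ∃ u : ℝˣ, ∀ i, v i = (u : ℝ) * w i := by
  obtain ⟨u, hu⟩ := (mk_eq_mk_iff ℝ v w hv hw).mp h
  exact ⟨u, fun i => by rw [← hu]; simp [Units.smul_def]⟩

lemma mk_eq_of_eq {v w : Fin n → ℝ} (hv : v ≠ 0) (h : v = w) (hw : w ≠ 0) :
    mk ℝ v hv = mk ℝ w hw := by
  apply (mk_eq_mk_iff' ℝ v w hv hw).mpr ⟨1, by simp [h]⟩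

/-- Scalar multiplication as a homeomorphism of the nonzero vectors. -/
def smulHomeo (u : ℝˣ) : {v : Fin n → ℝ // v ≠ 0} ≃ₜ {v : Fin n → ℝ // v ≠ 0} where
  toFun v := ⟨(u : ℝ) • v.1, smul_ne_zero u.ne_zero v.2⟩
  invFun v := ⟨((u⁻¹ : ℝˣ) : ℝ) • v.1, smul_ne_zero u⁻¹.ne_zero v.2⟩
  left_inv v := by ext : 1; simp [smul_smul]
  right_inv v := by ext : 1; simp [smul_smul]
  continuous_toFun := (continuous_subtype_val.const_smul (u : ℝ)).subtype_mk _
  continuous_invFun := (continuous_subtype_val.const_smul ((u⁻¹ : ℝˣ) : ℝ)).subtype_mk _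

lemma isOpenMap_projMk :
    IsOpenMap (Projectivization.mk' ℝ :
      {v : Fin n → ℝ // v ≠ 0} → Projectivization ℝ (Fin n → ℝ)) := by
  letI : Setoid {v : Fin n → ℝ // v ≠ 0} := projectivizationSetoid ℝ (Fin n → ℝ)
  have hq : Topology.IsQuotientMap (Projectivization.mk' ℝ :
      {v : Fin n → ℝ // v ≠ 0} → Projectivization ℝ (Fin n → ℝ)) := isQuotientMap_quotient_mk'
  intro W hW
  rw [← hq.isOpen_preimage]
  have : (Projectivization.mk' ℝ : {v : Fin n → ℝ // v ≠ 0} → Projectivization ℝ (Fin n → ℝ)) ⁻¹'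
      (Projectivization.mk' ℝ '' W) = ⋃ u : ℝˣ, (smulHomeo u) '' W := by
    ext v
    simp only [Set.mem_preimage, Set.mem_image, Set.mem_iUnion]
    constructor
    · rintro ⟨w, hw, h⟩
      have h' : mk ℝ w.1 w.2 = mk ℝ v.1 v.2 := h
      obtain ⟨u, hu⟩ := (mk_eq_mk_iff ℝ v.1 w.1 v.2 w.2).mp h'.symm
      exact ⟨u, w, hw, by ext : 1; simpa [smulHomeo, Units.smul_def] using hu⟩
    · rintro ⟨u, w, hw, rfl⟩
      refine ⟨w, hw, ?_⟩
      show mk ℝ w.1 w.2 = mk ℝ _ (smulHomeo u w).2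
      exact ((mk_eq_mk_iff ℝ _ w.1 _ w.2).mpr ⟨u, by simp [smulHomeo, Units.smul_def]⟩).symm
  rw [this]
  exact isOpen_iUnion fun u => (smulHomeo u).isOpenMap W hW
end Proj

section Curve
variable {d : ℕ} (hdodd : Odd d)

lemma conj1 (hdodd : Odd d) : ∀ (x y : Fin 3 → ℝ) (hx : x ≠ 0) (hy : y ≠ 0),
      x 0 ^ d + x 1 ^ d + x 2 ^ d = 0 →
      y 0 ^ d + y 1 ^ d + y 2 ^ d = 0 →
      ∀ (hx2 : (![x 1, x 2] : Fin 2 → ℝ) ≠ 0) (hy2 : (![y 1, y 2] : Fin 2 → ℝ) ≠ 0),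
        Projectivization.mk ℝ ![x 1, x 2] hx2 = Projectivization.mk ℝ ![y 1, y 2] hy2 →
        Projectivization.mk ℝ x hx = Projectivization.mk ℝ y hy := by
  intro x y hx hy hxs hys hx2 hy2 h
  obtain ⟨u, hu⟩ := exists_unit_smul hx2 hy2 h
  have h1 : x 1 = (u : ℝ) * y 1 := by simpa using hu 0
  have h2 : x 2 = (u : ℝ) * y 2 := by simpa using hu 1
  have e1 : x 1 ^ d = (u : ℝ) ^ d * y 1 ^ d := by rw [h1, mul_pow]
  have e2 : x 2 ^ d = (u : ℝ) ^ d * y 2 ^ d := by rw [h2, mul_pow]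
  have h0 : x 0 = (u : ℝ) * y 0 := by
    apply pow_injective hdodd
    show x 0 ^ d = ((u : ℝ) * y 0) ^ d
    rw [mul_pow]
    linear_combination hxs - (u : ℝ) ^ d * hys - e1 - e2
  refine (mk_eq_mk_iff ℝ x y hx hy).mpr ⟨u, ?_⟩
  funext i
  fin_cases i <;> simp [Units.smul_def, ← h0, ← h1, ← h2]

lemma conj2 (hd : 1 ≤ d) : ∀ p ∈ fermatCurveLocus d, (![p.rep 1, p.rep 2] : Fin 2 → ℝ) ≠ 0 := by
  intro p hp h
  have h1 : p.rep 1 = 0 := by simpa using congrFun h 0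
  have h2 : p.rep 2 = 0 := by simpa using congrFun h 1
  have h0 : p.rep 0 = 0 := by
    have hm : p.rep 0 ^ d = 0 := by
      have := hp
      simp only [fermatCurveLocus, Set.mem_setOf_eq, h1, h2,
        zero_pow (by omega : d ≠ 0)] at this
      linarith
    exact pow_eq_zero_iff (by omega) |>.mp hm
  exact p.rep_nonzero (by funext i; fin_cases i <;> simp [h0, h1, h2])

/-- Lift of the section `[x₁ : x₂] ↦ [x₀ : x₁ : x₂]` at the level of vectors. -/
noncomputable def Fvec (hdodd : Odd d) (w : Fin 2 → ℝ) : Fin 3 → ℝ :=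
  ![oddRoot hdodd (-(w 0 ^ d + w 1 ^ d)), w 0, w 1]

lemma Fvec_ne {w : Fin 2 → ℝ} (hw : w ≠ 0) : Fvec hdodd w ≠ 0 := by
  intro h
  apply hw
  funext i
  fin_cases i
  · simpa [Fvec] using congrFun h 1
  · simpa [Fvec] using congrFun h 2

lemma Fvec_sum (w : Fin 2 → ℝ) :
    Fvec hdodd w 0 ^ d + Fvec hdodd w 1 ^ d + Fvec hdodd w 2 ^ d = 0 := by
  simp only [Fvec, Matrix.cons_val_zero, Matrix.cons_val_one, Matrix.head_cons,
    Matrix.cons_val_two, Matrix.tail_cons, oddRoot_pow]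
  ring

lemma Fvec_smul (t : ℝ) (w : Fin 2 → ℝ) :
    Fvec hdodd (t • w) = t • Fvec hdodd w := by
  funext i
  fin_cases i <;> simp [Fvec]
  rw [show -(t * w 1) ^ d + -(t * w 0) ^ d = t ^ d * (-w 1 ^ d + -w 0 ^ d) by ring,
    oddRoot_smul]

/-- The section `ℝP¹ → ℝP²`. -/
noncomputable def fmk (hdodd : Odd d) :
    Projectivization ℝ (Fin 2 → ℝ) → Projectivization ℝ (Fin 3 → ℝ) :=
  Quotient.lift (fun w : {w : Fin 2 → ℝ // w ≠ 0} => mk ℝ (Fvec hdodd w.1) (Fvec_ne hdodd w.2))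
    (by
      rintro a b hab
      have h : mk ℝ a.1 a.2 = mk ℝ b.1 b.2 := Quotient.sound hab
      obtain ⟨u, hu⟩ := exists_unit_smul a.2 b.2 h
      have ha : a.1 = (u : ℝ) • b.1 := by funext i; simpa using hu i
      refine (mk_eq_mk_iff' ℝ _ _ _ _).mpr ⟨(u : ℝ), ?_⟩
      rw [ha, Fvec_smul])

lemma fmk_mk {w : Fin 2 → ℝ} (hw : w ≠ 0) :
    fmk hdodd (mk ℝ w hw) = mk ℝ (Fvec hdodd w) (Fvec_ne hdodd hw) := rfl

lemma continuous_fmk : Continuous (fmk hdodd) := by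
  apply Continuous.quotient_lift
  have hF : Continuous fun w : {w : Fin 2 → ℝ // w ≠ 0} => Fvec hdodd w.1 := by
    apply continuous_pi
    intro i
    fin_cases i <;> simp only [Fvec, Matrix.cons_val_zero, Matrix.cons_val_one,
      Matrix.head_cons, Matrix.cons_val_two, Matrix.tail_cons, Fin.isValue]
    · exact (continuous_oddRoot hdodd).comp
        ((((continuous_apply (0 : Fin 2)).comp continuous_subtype_val).pow d).add
          (((continuous_apply (1 : Fin 2)).comp continuous_subtype_val).pow d)).neg
    · exact (continuous_apply (0 : Fin 2)).comp continuous_subtype_val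
    · exact (continuous_apply (1 : Fin 2)).comp continuous_subtype_val
  exact continuous_quot_mk.comp (hF.subtype_mk _)

lemma sum_eq_of_mk_eq {v w : Fin 3 → ℝ} (hv : v ≠ 0) (hw : w ≠ 0)
    (h : mk ℝ v hv = mk ℝ w hw) (hs : w 0 ^ d + w 1 ^ d + w 2 ^ d = 0) :
    v 0 ^ d + v 1 ^ d + v 2 ^ d = 0 := by
  obtain ⟨u, hu⟩ := exists_unit_smul hv hw h
  rw [hu 0, hu 1, hu 2, mul_pow, mul_pow, mul_pow]
  linear_combination (u : ℝ) ^ d * hs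

lemma fmk_mem (q : Projectivization ℝ (Fin 2 → ℝ)) : fmk hdodd q ∈ fermatCurveLocus d := by
  induction q using Projectivization.ind with
  | h w hw =>
    rw [fmk_mk]
    show (mk ℝ (Fvec hdodd w) (Fvec_ne hdodd hw)).rep 0 ^ d + _ + _ = 0
    exact sum_eq_of_mk_eq (rep_nonzero _) (Fvec_ne hdodd hw) (mk_rep _) (Fvec_sum hdodd w)

lemma proj2_ne_iff {v w : Fin 3 → ℝ} (hv : v ≠ 0) (hw : w ≠ 0)
    (h : mk ℝ v hv = mk ℝ w hw) :
    (![v 1, v 2] : Fin 2 → ℝ) ≠ 0 ↔ (![w 1, w 2] : Fin 2 → ℝ) ≠ 0 := by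
  obtain ⟨u, hu⟩ := exists_unit_smul hv hw h
  constructor
  · intro hne h0
    apply hne
    funext i
    fin_cases i <;>
      simp_all [show w 1 = 0 from by simpa using congrFun h0 0,
        show w 2 = 0 from by simpa using congrFun h0 1]
  · intro hne h0
    apply hne
    have hv1 : v 1 = 0 := by simpa using congrFun h0 0
    have hv2 : v 2 = 0 := by simpa using congrFun h0 1
    have hw1 : w 1 = 0 := by
      have := hu 1; rw [hv1] at this
      exact (mul_eq_zero.mp this.symm).resolve_left u.ne_zero
    have hw2 : w 2 = 0 := by
      have := hu 2; rw [hv2] at this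
      exact (mul_eq_zero.mp this.symm).resolve_left u.ne_zero
    funext i
    fin_cases i <;> simp [hw1, hw2]

lemma proj2_eq {v w : Fin 3 → ℝ} (hv : v ≠ 0) (hw : w ≠ 0)
    (h : mk ℝ v hv = mk ℝ w hw) (hv2 : (![v 1, v 2] : Fin 2 → ℝ) ≠ 0)
    (hw2 : (![w 1, w 2] : Fin 2 → ℝ) ≠ 0) :
    mk ℝ ![v 1, v 2] hv2 = mk ℝ ![w 1, w 2] hw2 := by
  obtain ⟨u, hu⟩ := exists_unit_smul hv hw h
  refine (mk_eq_mk_iff ℝ _ _ _ _).mpr ⟨u, ?_⟩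
  funext i
  fin_cases i <;> simp [Units.smul_def, ← hu 1, ← hu 2]

/-- The projection from the Fermat locus to `ℝP¹`. -/
noncomputable def gmap (hd : 1 ≤ d) : fermatCurveLocus d → Projectivization ℝ (Fin 2 → ℝ) :=
  fun p => mk ℝ ![p.1.rep 1, p.1.rep 2] (conj2 hd p.1 p.2)

/-- The section from `ℝP¹` to the Fermat locus. -/
noncomputable def phi (hdodd : Odd d) :
    Projectivization ℝ (Fin 2 → ℝ) → fermatCurveLocus d :=
  fun q => ⟨fmk hdodd q, fmk_mem hdodd q⟩

lemma continuous_phi : Continuous (phi hdodd) :=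
  (continuous_fmk hdodd).subtype_mk _

lemma phi_gmap (hd : 1 ≤ d) : ∀ p : fermatCurveLocus d, phi hdodd (gmap hd p) = p := by
  intro p
  apply Subtype.ext
  show fmk hdodd (mk ℝ ![p.1.rep 1, p.1.rep 2] (conj2 hd p.1 p.2)) = p.1
  rw [fmk_mk]
  have hsum : p.1.rep 0 ^ d + p.1.rep 1 ^ d + p.1.rep 2 ^ d = 0 := p.2
  have h0 : Fvec hdodd ![p.1.rep 1, p.1.rep 2] = p.1.rep := by
    funext i
    fin_cases i <;> simp [Fvec]
    rw [show -(p.1.rep 2) ^ d + -(p.1.rep 1) ^ d = p.1.rep 0 ^ d by linarith, pow_oddRoot]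
  rw [show mk ℝ (Fvec hdodd ![p.1.rep 1, p.1.rep 2]) (Fvec_ne hdodd (conj2 hd p.1 p.2))
      = mk ℝ p.1.rep p.1.rep_nonzero from mk_eq_of_eq _ h0 _, mk_rep]

lemma gmap_phi (hd : 1 ≤ d) : ∀ q, gmap hd (phi hdodd q) = q := by
  intro q
  induction q using Projectivization.ind with
  | h w hw =>
    set p := mk ℝ (Fvec hdodd w) (Fvec_ne hdodd hw) with hp
    have hrep : mk ℝ p.rep p.rep_nonzero = mk ℝ (Fvec hdodd w) (Fvec_ne hdodd hw) := by
      rw [mk_rep]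
    have hF2 : (![Fvec hdodd w 1, Fvec hdodd w 2] : Fin 2 → ℝ) ≠ 0 := by
      intro h
      apply hw
      funext i
      fin_cases i
      · simpa [Fvec] using congrFun h 0
      · simpa [Fvec] using congrFun h 1
    have hrep2 : (![p.rep 1, p.rep 2] : Fin 2 → ℝ) ≠ 0 :=
      (proj2_ne_iff _ _ hrep).mpr hF2
    have key := proj2_eq _ _ hrep hrep2 hF2
    have hstep : gmap hd (phi hdodd (mk ℝ w hw)) = mk ℝ ![p.rep 1, p.rep 2] hrep2 := rfl
    rw [hstep, key]
    exact mk_eq_of_eq _ (by funext i; fin_cases i <;> simp [Fvec]) hw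

lemma continuous_gmap (hd : 1 ≤ d) : Continuous (gmap (d := d) hd) := by
  rw [continuous_def]
  intro O hO
  have hTc : Continuous fun v : {v : Fin 3 → ℝ // v ≠ 0} => (![v.1 1, v.1 2] : Fin 2 → ℝ) := by
    apply continuous_pi
    intro i
    fin_cases i <;> simp only [Matrix.cons_val_zero, Matrix.cons_val_one, Matrix.head_cons,
      Fin.isValue]
    · exact (continuous_apply (1 : Fin 3)).comp continuous_subtype_val
    · exact (continuous_apply (2 : Fin 3)).comp continuous_subtype_val
  set T : Set {v : Fin 3 → ℝ // v ≠ 0} :=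
    {v | (![v.1 1, v.1 2] : Fin 2 → ℝ) ≠ 0} with hTdef
  have hT : IsOpen T := isOpen_compl_singleton.preimage hTc
  let proj : T → Projectivization ℝ (Fin 2 → ℝ) := fun v => mk ℝ ![v.1.1 1, v.1.1 2] v.2
  have hproj : Continuous proj := by
    apply continuous_quot_mk.comp
    apply Continuous.subtype_mk
    exact hTc.comp continuous_subtype_val
  set A : Set (Projectivization ℝ (Fin 3 → ℝ)) :=
    Projectivization.mk' ℝ '' (Subtype.val '' (proj ⁻¹' O)) with hAdef
  have hA : IsOpen A :=
    isOpenMap_projMk _ (hT.isOpenMap_subtype_val _ (hproj.isOpen_preimage O hO))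
  have hset : gmap hd ⁻¹' O = Subtype.val ⁻¹' A := by
    ext p
    simp only [Set.mem_preimage, hAdef, Set.mem_image]
    constructor
    · intro hgo
      have hrT : (⟨p.1.rep, p.1.rep_nonzero⟩ : {v : Fin 3 → ℝ // v ≠ 0}) ∈ T :=
        conj2 hd p.1 p.2
      refine ⟨⟨p.1.rep, p.1.rep_nonzero⟩, ⟨⟨⟨p.1.rep, p.1.rep_nonzero⟩, hrT⟩, hgo, rfl⟩, ?_⟩
      show mk ℝ p.1.rep p.1.rep_nonzero = p.1
      exact mk_rep p.1
    · rintro ⟨v, ⟨t, ht, rfl⟩, hmk⟩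
      have h : mk ℝ t.1.1 t.1.2 = mk ℝ p.1.rep p.1.rep_nonzero := by
        rw [mk_rep]; exact hmk
      have := proj2_eq _ _ h t.2 (conj2 hd p.1 p.2)
      show gmap hd p ∈ O
      have : gmap hd p = proj t := by
        rw [show gmap hd p = mk ℝ ![p.1.rep 1, p.1.rep 2] (conj2 hd p.1 p.2) from rfl]
        exact this.symm
      rw [this]
      exact ht
  rw [hset]
  exact hA.preimage continuous_subtype_val

end Curve

/-- For odd `d`: two points of the Fermat locus with the same projection `[x₁ : x₂]` are
equal, every point of the locus has `(x₁,x₂) ≠ (0,0)`, and the locus is homeomorphic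
to `ℝP¹`. -/
theorem stmt18 (d : ℕ) (hd : 1 ≤ d) (hdodd : Odd d) :
    (∀ (x y : Fin 3 → ℝ) (hx : x ≠ 0) (hy : y ≠ 0),
      x 0 ^ d + x 1 ^ d + x 2 ^ d = 0 →
      y 0 ^ d + y 1 ^ d + y 2 ^ d = 0 →
      ∀ (hx2 : (![x 1, x 2] : Fin 2 → ℝ) ≠ 0) (hy2 : (![y 1, y 2] : Fin 2 → ℝ) ≠ 0),
        Projectivization.mk ℝ ![x 1, x 2] hx2 = Projectivization.mk ℝ ![y 1, y 2] hy2 →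
        Projectivization.mk ℝ x hx = Projectivization.mk ℝ y hy) ∧
    (∀ p ∈ fermatCurveLocus d, (![p.rep 1, p.rep 2] : Fin 2 → ℝ) ≠ 0) ∧
    Nonempty ((fermatCurveLocus d) ≃ₜ Projectivization ℝ (Fin 2 → ℝ)) := by
  refine ⟨conj1 hdodd, conj2 hd, ⟨{
    toFun := gmap hd
    invFun := phi hdodd
    left_inv := phi_gmap hdodd hd
    right_inv := gmap_phi hdodd hd
    continuous_toFun := continuous_gmap hd
    continuous_invFun := continuous_phi hdodd }⟩⟩
end
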